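/- Let g₂, g₃ ∈ ℂ and let c ∈ ℂ with c² = g₂/12. Let U ⊆ ℂ be open and let P : ℂ → ℂ be three times differentiable on U with P'(x)² = 4P(x)³ − g₂·P(x) − g₃ and P''(x) = 6P(x)² − g₂/2 on U, and suppose P(x)² ≠ g₂/12 and P''(x) ≠ 0 for all x ∈ U. Then for all x ∈ U: P'(x)/(P(x) + c) + P'(x)/(P(x) − c) = P'''(x)/P''(x). Consequently, both the constant function 1 and the function P' satisfy −f''(x) + (P'(x)/(P(x) + c) + P'(x)/(P(x) − c))·f'(x) = 0 on U. -/

import Mathlib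

/-- The identity `P'/(P + c) + P'/(P - c) = P'''/P''` with `c² = g₂/12` for a function
satisfying the Weierstrass differential equations, and the consequence that the constant
function `1` and the function `P'` both solve `-f'' + (P'/(P + c) + P'/(P - c)) f' = 0`. -/
theorem weierstrass_ratio_identity_and_solutions
    (g₂ g₃ c : ℂ) (hc : c ^ 2 = g₂ / 12)
    (U : Set ℂ) (hU : IsOpen U)
    (P : ℂ → ℂ)
    (hP : ∀ x ∈ U, DifferentiableAt ℂ P x)
    (hP' : ∀ x ∈ U, DifferentiableAt ℂ (deriv P) x)
    (hP'' : ∀ x ∈ U, DifferentiableAt ℂ (deriv (deriv P)) x)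
    (hPsq : ∀ x ∈ U, (deriv P x) ^ 2 = 4 * P x ^ 3 - g₂ * P x - g₃)
    (hPdd : ∀ x ∈ U, deriv (deriv P) x = 6 * P x ^ 2 - g₂ / 2)
    (hPc : ∀ x ∈ U, P x ^ 2 ≠ g₂ / 12)
    (hPdd0 : ∀ x ∈ U, deriv (deriv P) x ≠ 0) :
    (∀ x ∈ U, deriv P x / (P x + c) + deriv P x / (P x - c)
      = deriv (deriv (deriv P)) x / deriv (deriv P) x) ∧
    (∀ x ∈ U, -deriv (deriv (fun _ : ℂ => (1 : ℂ))) x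
      + (deriv P x / (P x + c) + deriv P x / (P x - c)) * deriv (fun _ : ℂ => (1 : ℂ)) x = 0) ∧
    (∀ x ∈ U, -deriv (deriv (deriv P)) x
      + (deriv P x / (P x + c) + deriv P x / (P x - c)) * deriv (deriv P) x = 0) := by
  have key : ∀ x ∈ U, deriv P x / (P x + c) + deriv P x / (P x - c)
      = deriv (deriv (deriv P)) x / deriv (deriv P) x := by
    intro x hx
    -- third derivative
    have hev : ∀ᶠ y in nhds x, deriv (deriv P) y = 6 * P y ^ 2 - g₂ / 2 :=
      Filter.eventually_of_mem (hU.mem_nhds hx) hPdd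
    have h3 : deriv (deriv (deriv P)) x = 12 * P x * deriv P x := by
      have hd : HasDerivAt (fun y => 6 * P y ^ 2 - g₂ / 2) (12 * P x * deriv P x) x := by
        have := (((hP x hx).hasDerivAt).pow 2).const_mul (6 : ℂ)
        have h := this.sub_const (g₂ / 2)
        exact h.congr_deriv (by rw [show (2:ℕ) - 1 = 1 from rfl]; push_cast; ring)
      calc deriv (deriv (deriv P)) x = deriv (fun y => 6 * P y ^ 2 - g₂ / 2) x :=
            Filter.EventuallyEq.deriv_eq hev
        _ = 12 * P x * deriv P x := hd.deriv
    have hpc : P x + c ≠ 0 := by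
      intro h
      apply hPc x hx
      have : P x = -c := by linear_combination h
      rw [this, ← hc]; ring
    have hmc : P x - c ≠ 0 := by
      intro h
      apply hPc x hx
      have : P x = c := by linear_combination h
      rw [this, hc]
    have h2 := hPdd x hx
    have h20 := hPdd0 x hx
    have h2ne : 6 * P x ^ 2 - g₂ / 2 ≠ 0 := h2 ▸ h20
    rw [h3, h2, div_add_div _ _ hpc hmc, div_eq_div_iff (mul_ne_zero hpc hmc) h2ne]
    linear_combination (12 * P x * deriv P x) * hc
  refine ⟨key, ?_, ?_⟩
  · intro x hx
    simp
  · intro x hx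
    rw [key x hx, div_mul_cancel₀ _ (hPdd0 x hx)]
    ring
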